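/- Let g, h : ℝ^m → ℝ be strongly convex with the same parameter ρ > 0 and g differentiable on ℝ^m, set φ := g − h, and fix α > 0. Let (x_k), (y_k) be sequences in ℝ^m and (u_k), (λ_k) sequences with u_k ∈ ∂h(x_k), y_k a minimizer over ℝ^m of z ↦ g(z) − ⟨u_k, z⟩, d_k := y_k − x_k, λ_k ≥ 0, x_{k+1} = y_k + λ_k d_k, and φ(x_{k+1}) ≤ φ(y_k) − α λ_k² ‖d_k‖² for all k. Suppose φ is bounded below on ℝ^m. Then Σ_{k=0}^{∞} ‖d_k‖² < +∞. Furthermore, if there exists λ̄ ≥ 0 with λ_k ≤ λ̄ for all k, then Σ_{k=0}^{∞} ‖x_{k+1} − x_k‖² < +∞. -/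
import Mathlib


open RealInnerProductSpace Filter

/-- The convex subdifferential of `f` at `x`. -/
def subdiff {E : Type*} [NormedAddCommGroup E] [InnerProductSpace ℝ E]
    (f : E → ℝ) (x : E) : Set E :=
  {w | ∀ y, f x + ⟪w, y - x⟫ ≤ f y}

/-- Strongly convex function with a subgradient inequality satisfies the strengthened
subgradient inequality. -/
lemma strong_subgrad {E : Type*} [NormedAddCommGroup E] [InnerProductSpace ℝ E]
    (f : E → ℝ) (ρ : ℝ)
    (hconv : ConvexOn ℝ Set.univ (fun z => f z - ρ / 2 * ‖z‖ ^ 2))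
    (x w : E) (hsub : ∀ z, f x + ⟪w, z - x⟫ ≤ f z) (z : E) :
    f x + ⟪w, z - x⟫ + ρ / 2 * ‖z - x‖ ^ 2 ≤ f z := by
  have key : ∀ t ∈ Set.Ioo (0:ℝ) 1,
      ⟪w, z - x⟫ + ρ / 2 * (1 - t) * ‖z - x‖ ^ 2 ≤ f z - f x := by
    intro t ht
    set p := x + t • (z - x) with hp
    have h1 : f x + t * ⟪w, z - x⟫ ≤ f p := by
      have := hsub p
      simpa [hp, real_inner_smul_right] using this
    have hcomb : (1 - t) • x + t • z = p := by
      simp only [hp]; module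
    have h2 := hconv.2 (Set.mem_univ x) (Set.mem_univ z)
      (by linarith [ht.2] : (0:ℝ) ≤ 1 - t) (le_of_lt ht.1) (by ring)
    rw [hcomb] at h2
    simp only [smul_eq_mul] at h2
    have hnorm : ‖p‖ ^ 2 = ‖x‖ ^ 2 + 2 * t * ⟪x, z - x⟫ + t ^ 2 * ‖z - x‖ ^ 2 := by
      rw [hp, norm_add_sq_real, real_inner_smul_right, norm_smul, mul_pow, Real.norm_eq_abs,
        sq_abs]
      ring
    have hexp : ‖z - x‖ ^ 2 = ‖z‖ ^ 2 - 2 * ⟪x, z⟫ + ‖x‖ ^ 2 := by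
      rw [norm_sub_sq_real, real_inner_comm]
    have hinner : ⟪x, z - x⟫ = ⟪x, z⟫ - ‖x‖ ^ 2 := by
      rw [inner_sub_right, real_inner_self_eq_norm_sq]
    have hbr : (1 - t) * (ρ / 2 * ‖x‖ ^ 2) + t * (ρ / 2 * ‖z‖ ^ 2) - ρ / 2 * ‖p‖ ^ 2
        = ρ / 2 * (t * (1 - t)) * ‖z - x‖ ^ 2 := by
      rw [hnorm, hexp, hinner]; ring
    have h3 : t * (⟪w, z - x⟫ + ρ / 2 * (1 - t) * ‖z - x‖ ^ 2) ≤ t * (f z - f x) := by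
      nlinarith [h1, h2, hbr]
    exact le_of_mul_le_mul_left h3 ht.1
  have tends : Tendsto (fun t : ℝ => ⟪w, z - x⟫ + ρ / 2 * (1 - t) * ‖z - x‖ ^ 2)
      (nhdsWithin 0 (Set.Ioi 0))
      (nhds (⟪w, z - x⟫ + ρ / 2 * (1 - (0:ℝ)) * ‖z - x‖ ^ 2)) := by
    apply Tendsto.mono_left _ nhdsWithin_le_nhds
    exact (Continuous.tendsto (by continuity) 0)
  have hev : ∀ᶠ t in nhdsWithin (0:ℝ) (Set.Ioi 0),
      ⟪w, z - x⟫ + ρ / 2 * (1 - t) * ‖z - x‖ ^ 2 ≤ f z - f x := by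
    filter_upwards [Ioo_mem_nhdsGT_of_mem (Set.mem_Ico.mpr ⟨le_refl (0:ℝ), one_pos⟩)]
      with t ht using key t ht
  have := le_of_tendsto tends hev
  linarith

/-- For the sequences generated by BDCA with `φ = g - h` bounded below, one has
`Σ ‖d_k‖² < ∞`; moreover, if the step sizes `λ_k` are uniformly bounded by some `λ̄ ≥ 0`,
then `Σ ‖x_{k+1} - x_k‖² < ∞`. -/
theorem stmt10 {m : ℕ} (g h : EuclideanSpace ℝ (Fin m) → ℝ) (ρ α : ℝ)
    (hρ : 0 < ρ) (hα : 0 < α)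
    (g' : EuclideanSpace ℝ (Fin m) → EuclideanSpace ℝ (Fin m))
    (hg : ConvexOn ℝ Set.univ (fun z => g z - ρ / 2 * ‖z‖ ^ 2))
    (hh : ConvexOn ℝ Set.univ (fun z => h z - ρ / 2 * ‖z‖ ^ 2))
    (hg' : ∀ x, HasGradientAt g (g' x) x)
    (x y d u : ℕ → EuclideanSpace ℝ (Fin m)) (lam : ℕ → ℝ)
    (hu : ∀ k, u k ∈ subdiff h (x k))
    (hy : ∀ k, ∀ z, g (y k) - ⟪u k, y k⟫ ≤ g z - ⟪u k, z⟫)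
    (hd : ∀ k, d k = y k - x k)
    (hlam : ∀ k, 0 ≤ lam k)
    (hx : ∀ k, x (k + 1) = y k + lam k • d k)
    (hdesc : ∀ k, g (x (k + 1)) - h (x (k + 1)) ≤
      (g (y k) - h (y k)) - α * lam k ^ 2 * ‖d k‖ ^ 2)
    (hbdd : ∃ B : ℝ, ∀ z, B ≤ g z - h z) :
    Summable (fun k => ‖d k‖ ^ 2) ∧
      ((∃ lb : ℝ, 0 ≤ lb ∧ ∀ k, lam k ≤ lb) →
        Summable (fun k => ‖x (k + 1) - x k‖ ^ 2)) := by
  -- key descent: φ(y k) ≤ φ(x k) - ρ‖d k‖²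
  have hkey : ∀ k, g (y k) - h (y k) ≤ (g (x k) - h (x k)) - ρ * ‖d k‖ ^ 2 := by
    intro k
    -- strengthened subgradient inequality for h
    have hH := strong_subgrad h ρ hh (x k) (u k) (hu k) (y k)
    -- strengthened minimality inequality for g - ⟪u k, ·⟫
    have hconvk : ConvexOn ℝ Set.univ (fun z => (g z - ⟪u k, z⟫) - ρ / 2 * ‖z‖ ^ 2) := by
      have heq : (fun z : EuclideanSpace ℝ (Fin m) => (g z - ⟪u k, z⟫) - ρ / 2 * ‖z‖ ^ 2)
          = fun z => (g z - ρ / 2 * ‖z‖ ^ 2) + (-⟪u k, z⟫) := by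
        funext z; ring
      rw [heq]
      refine hg.add ⟨convex_univ, fun p _ q _ a b ha hb hab => le_of_eq ?_⟩
      simp only [inner_add_right, real_inner_smul_right, smul_eq_mul, neg_add]; ring
    have hsubk : ∀ z, (g (y k) - ⟪u k, y k⟫) + ⟪(0 : EuclideanSpace ℝ (Fin m)), z - y k⟫
        ≤ g z - ⟪u k, z⟫ := by
      intro z; simpa using hy k z
    have hG := strong_subgrad (fun z => g z - ⟪u k, z⟫) ρ hconvk (y k) 0 hsubk (x k)
    simp only [inner_zero_left, add_zero] at hG
    have hrev : ‖x k - y k‖ = ‖y k - x k‖ := norm_sub_rev _ _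
    have hin : ⟪u k, y k - x k⟫ = ⟪u k, y k⟫ - ⟪u k, x k⟫ := by
      rw [inner_sub_right]
    rw [hd k]
    rw [hrev] at hG
    linarith
  have hnn : ∀ k, (0:ℝ) ≤ α * lam k ^ 2 * ‖d k‖ ^ 2 := fun k => by positivity
  have hdec : ∀ k, g (x (k + 1)) - h (x (k + 1)) + ρ * ‖d k‖ ^ 2 ≤ g (x k) - h (x k) := by
    intro k
    have := hdesc k
    have := hkey k
    have := hnn k
    linarith
  obtain ⟨B, hB⟩ := hbdd
  have hsum : ∀ n, ∑ k ∈ Finset.range n, ρ * ‖d k‖ ^ 2 ≤ (g (x 0) - h (x 0)) - B := by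
    intro n
    have hle : ∑ k ∈ Finset.range n, ρ * ‖d k‖ ^ 2
        ≤ ∑ k ∈ Finset.range n, ((g (x k) - h (x k)) - (g (x (k+1)) - h (x (k+1)))) := by
      refine Finset.sum_le_sum fun k _ => ?_
      have := hdec k; linarith
    rw [Finset.sum_range_sub' (fun k => g (x k) - h (x k)) n] at hle
    have := hB (x n)
    linarith
  have hsummable : Summable (fun k => ρ * ‖d k‖ ^ 2) :=
    summable_of_sum_range_le (fun k => by positivity) hsum
  have hsd : Summable (fun k => ‖d k‖ ^ 2) := by
    have := hsummable.mul_left ρ⁻¹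
    have heq : (fun k => ρ⁻¹ * (ρ * ‖d k‖ ^ 2)) = fun k => ‖d k‖ ^ 2 := by
      funext k; field_simp
    rwa [heq] at this
  refine ⟨hsd, ?_⟩
  rintro ⟨lb, hlb0, hlb⟩
  have hxx : ∀ k, ‖x (k + 1) - x k‖ ^ 2 = (1 + lam k) ^ 2 * ‖d k‖ ^ 2 := by
    intro k
    have hxd : x (k + 1) - x k = (1 + lam k) • d k := by
      rw [hx k, hd k]; module
    rw [hxd, norm_smul, mul_pow, Real.norm_eq_abs, sq_abs]
  refine Summable.of_nonneg_of_le (fun k => by positivity) (fun k => ?_)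
    (hsd.mul_left ((1 + lb) ^ 2))
  rw [hxx k]
  have h1 : (1 + lam k) ^ 2 ≤ (1 + lb) ^ 2 := by
    have := hlam k; have := hlb k
    nlinarith
  have := sq_nonneg (‖d k‖)
  nlinarith [sq_nonneg (‖d k‖)]
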